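/- Let k be a field and A a commutative Hopf algebra over k that is not finitely generated as a k-algebra. Then the following three cardinals are equal: (1) the dimension of A as a k-vector space; (2) the least cardinality of a subset of A that generates A as a k-algebra; (3) the least cardinal κ for which there exists a family of κ finitely generated Hopf subalgebras of A, directed under inclusion, whose union is A. -/

import Mathlib

open TensorProduct

section Prelim

variable (k : Type) [Field k]

/-- Bundled commutative Hopf algebra over `k`. -/
structure HopfAlg where
  carrier : Type
  [instCommRing : CommRing carrier]
  [instHopf : HopfAlgebra k carrier]

attribute [instance] HopfAlg.instCommRing HopfAlg.instHopf

variable {k}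

/-- `B` is a Hopf subalgebra of `A`: the comultiplication maps `B` into the image of
`B ⊗ B` in `A ⊗ A` and the antipode maps `B` into `B`. -/
def IsHopfSubalgebra {A : Type} [CommRing A] [HopfAlgebra k A]
    (B : Subalgebra k A) : Prop :=
  (∀ b ∈ B, Coalgebra.comul (R := k) b ∈
      LinearMap.range (TensorProduct.map B.val.toLinearMap B.val.toLinearMap)) ∧
  (∀ b ∈ B, HopfAlgebra.antipode (R := k) b ∈ B)

/-- A Hopf algebra homomorphism: a `k`-algebra homomorphism commuting with the
comultiplications. -/
def IsHopfHom {A B : Type} [CommRing A] [HopfAlgebra k A]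
    [CommRing B] [HopfAlgebra k B] (f : A →ₐ[k] B) : Prop :=
  ∀ a : A, Coalgebra.comul (R := k) (f a) =
    TensorProduct.map f.toLinearMap f.toLinearMap (Coalgebra.comul (R := k) a)

/-- A Hopf ideal of `A`: the counit vanishes on `I`, the comultiplication maps `I` into
`I ⊗ A + A ⊗ I`, and the antipode maps `I` into `I`. -/
def IsHopfIdeal (k : Type) [Field k] {A : Type} [CommRing A] [HopfAlgebra k A]
    (I : Ideal A) : Prop :=
  (∀ a ∈ I, Coalgebra.counit (R := k) a = 0) ∧
  (∀ a ∈ I, Coalgebra.comul (R := k) a ∈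
      LinearMap.range (TensorProduct.map (Submodule.restrictScalars k I).subtype
        (LinearMap.id : A →ₗ[k] A)) ⊔
      LinearMap.range (TensorProduct.map (LinearMap.id : A →ₗ[k] A)
        (Submodule.restrictScalars k I).subtype)) ∧
  (∀ a ∈ I, HopfAlgebra.antipode (R := k) a ∈ I)

/-- A subalgebra `S` of `A` "belongs to the class `𝒞`" if some member of `𝒞` maps onto `S`
by an injective Hopf algebra homomorphism into `A`. -/
def MemFormation (𝒞 : Set (HopfAlg k)) {A : Type} [CommRing A]
    [HopfAlgebra k A] (S : Subalgebra k A) : Prop :=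
  ∃ D ∈ 𝒞, ∃ f : D.carrier →ₐ[k] A, IsHopfHom f ∧ Function.Injective f ∧ f.range = S

/-- A formation of (coordinate rings of) algebraic groups, Hopf-encoded. -/
structure IsFormation (𝒞 : Set (HopfAlg k)) : Prop where
  fg : ∀ B ∈ 𝒞, (⊤ : Subalgebra k B.carrier).FG
  nontrivial : ∃ B ∈ 𝒞, ¬ Function.Surjective (algebraMap k B.carrier)
  iso_closed : ∀ B ∈ 𝒞, ∀ B' : HopfAlg k,
    (∃ e : B.carrier ≃ₐ[k] B'.carrier, IsHopfHom e.toAlgHom) → B' ∈ 𝒞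
  sub_closed : ∀ B ∈ 𝒞, ∀ S : Subalgebra k B.carrier,
    IsHopfSubalgebra S → MemFormation 𝒞 S
  sup_closed : ∀ (A : HopfAlg k) (B₁ B₂ : Subalgebra k A.carrier),
    IsHopfSubalgebra B₁ → IsHopfSubalgebra B₂ →
    MemFormation 𝒞 B₁ → MemFormation 𝒞 B₂ → MemFormation 𝒞 (B₁ ⊔ B₂)

/-- `A` is pro-`𝒞`: every finitely generated Hopf subalgebra of `A` belongs to `𝒞`. -/
def IsProC (𝒞 : Set (HopfAlg k)) (A : Type) [CommRing A] [HopfAlgebra k A] : Prop :=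
  ∀ S : Subalgebra k A, S.FG → IsHopfSubalgebra S → MemFormation 𝒞 S

/-- The family `ι` of `k`-algebra homomorphisms `A → R` converges to `1`. -/
def ConvergesToOne {A : Type} [CommRing A] [HopfAlgebra k A]
    {R : Type} [CommRing R] [Algebra k R] {X : Type} (ι : X → (A →ₐ[k] R)) : Prop :=
  ∀ S : Subalgebra k A, S.FG → IsHopfSubalgebra S →
    {x : X | ∃ a ∈ S, ι x a ≠ algebraMap k R (Coalgebra.counit (R := k) a)}.Finite

/-- The only Hopf ideal of `A` contained in the intersection of the kernels of the `ι x`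
is the zero ideal. -/
def HopfGenerates {A : Type} [CommRing A] [HopfAlgebra k A]
    {R : Type} [CommRing R] [Algebra k R] {X : Type} (ι : X → (A →ₐ[k] R)) : Prop :=
  ∀ I : Ideal A, IsHopfIdeal k I → (∀ x : X, I ≤ RingHom.ker (ι x).toRingHom) → I = ⊥

/-- `(A, ι)` is the free pro-`𝒞` group on `X` over `R`. -/
structure IsFreeProC (𝒞 : Set (HopfAlg k)) (R : Type) [CommRing R] [Algebra k R]
    (X : Type) (A : Type) [CommRing A] [HopfAlgebra k A]
    (ι : X → (A →ₐ[k] R)) : Prop where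
  proC : IsProC 𝒞 A
  conv : ConvergesToOne ι
  gen : HopfGenerates ι
  univ : ∀ (A' : HopfAlg k) (φ : X → (A'.carrier →ₐ[k] R)),
    ConvergesToOne φ → HopfGenerates φ →
    ∃! u : A'.carrier →ₐ[k] A, IsHopfHom u ∧ ∀ x : X, φ x = (ι x).comp u

/-- `A` is a saturated pro-`𝒞` Hopf algebra: every nontrivial pro-`𝒞` embedding problem
with the appropriate size restrictions has a solution. -/
def IsSaturated (𝒞 : Set (HopfAlg k)) (A : Type) [CommRing A] [HopfAlgebra k A] : Prop :=
  ∀ (B C : HopfAlg k) (f : C.carrier →ₐ[k] B.carrier) (g : C.carrier →ₐ[k] A),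
    IsHopfHom f → IsHopfHom g → Function.Injective f → Function.Injective g →
    ¬ Function.Surjective f → IsProC 𝒞 B.carrier →
    ((⊤ : Subalgebra k C.carrier).FG ∨ Module.rank k C.carrier < Module.rank k A) →
    ((⊤ : Subalgebra k B.carrier).FG ∨ Module.rank k B.carrier ≤ Module.rank k A) →
    ∃ h : B.carrier →ₐ[k] A, IsHopfHom h ∧ Function.Injective h ∧ h.comp f = g

end Prelim

noncomputable section AuxDev
open TensorProduct Coalgebra Cardinal

variable {k : Type} [Field k]

section Conv
variable {C : Type} [AddCommGroup C] [Module k C] [Coalgebra k C]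
variable {B : Type} [CommRing B] [Algebra k B]

/-- Convolution product on linear maps from a coalgebra to an algebra. -/
def conv (f g : C →ₗ[k] B) : C →ₗ[k] B :=
  LinearMap.mul' k B ∘ₗ TensorProduct.map f g ∘ₗ Coalgebra.comul

/-- The unit of the convolution algebra. -/
def convUnit : C →ₗ[k] B := Algebra.linearMap k B ∘ₗ Coalgebra.counit

lemma convUnit_apply (a : C) : (convUnit (k := k) (B := B)) a
    = algebraMap k B (Coalgebra.counit (R := k) a) := rfl

lemma conv_repr (f g : C →ₗ[k] B) {a : C} {ι : Type} (r : Coalgebra.Repr k a ι) :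
    conv f g a = ∑ i ∈ r.index, f (r.left i) * g (r.right i) := by
  simp only [conv, LinearMap.comp_apply, ← r.eq, map_sum, TensorProduct.map_tmul,
    LinearMap.mul'_apply]

lemma conv_unit_right (f : C →ₗ[k] B) : conv f convUnit = f := by
  ext a
  have h := congrArg (TensorProduct.rid k B) (sum_map_tmul_counit_eq (R := k) f a (repr := ℛ k a))
  simp only [map_sum, TensorProduct.rid_tmul, one_smul] at h
  rw [conv_repr f _ (ℛ k a)]
  rw [← h]
  simp [convUnit_apply, Algebra.smul_def, mul_comm]

lemma conv_unit_left (f : C →ₗ[k] B) : conv convUnit f = f := by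
  ext a
  have h := congrArg (TensorProduct.lid k B) (sum_counit_tmul_map_eq (R := k) f a (repr := ℛ k a))
  simp only [map_sum, TensorProduct.lid_tmul, one_smul] at h
  rw [conv_repr _ f (ℛ k a)]
  rw [← h]
  simp [convUnit_apply, Algebra.smul_def]

lemma conv_assoc (f g h : C →ₗ[k] B) : conv (conv f g) h = conv f (conv g h) := by
  ext a
  have key := sum_map_tmul_tmul_eq (R := k) f g h a (repr := ℛ k a)
    (a₁ := fun i => ℛ k ((ℛ k a).left i)) (a₂ := fun i => ℛ k ((ℛ k a).right i))
  have key2 := congrArg (LinearMap.mul' k B ∘ₗ LinearMap.lTensor B (LinearMap.mul' k B)) key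
  simp only [map_sum, LinearMap.comp_apply, LinearMap.lTensor_tmul, LinearMap.mul'_apply] at key2
  rw [conv_repr (conv f g) h (ℛ k a), conv_repr f (conv g h) (ℛ k a)]
  calc ∑ i ∈ (ℛ k a).index, conv f g ((ℛ k a).left i) * h ((ℛ k a).right i)
      = ∑ i ∈ (ℛ k a).index, ∑ j ∈ (ℛ k ((ℛ k a).left i)).index,
          f ((ℛ k ((ℛ k a).left i)).left j) * (g ((ℛ k ((ℛ k a).left i)).right j)
            * h ((ℛ k a).right i)) := by
        refine Finset.sum_congr rfl fun i _ => ?_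
        rw [conv_repr f g (ℛ k ((ℛ k a).left i)), Finset.sum_mul]
        simp [mul_assoc]
    _ = ∑ i ∈ (ℛ k a).index, ∑ j ∈ (ℛ k ((ℛ k a).right i)).index,
          f ((ℛ k a).left i) * (g ((ℛ k ((ℛ k a).right i)).left j)
            * h ((ℛ k ((ℛ k a).right i)).right j)) := key2.symm
    _ = ∑ i ∈ (ℛ k a).index, f ((ℛ k a).left i) * conv g h ((ℛ k a).right i) := by
        refine Finset.sum_congr rfl fun i _ => ?_
        rw [conv_repr g h (ℛ k ((ℛ k a).right i)), Finset.mul_sum]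

lemma conv_unique {f x y : C →ₗ[k] B} (hx : conv x f = convUnit) (hy : conv f y = convUnit) :
    x = y := by
  have h : conv x (conv f y) = conv (conv x f) y := (conv_assoc x f y).symm
  rw [hy, hx, conv_unit_right, conv_unit_left] at h
  exact h

end Conv

section Antipode
variable {A : Type} [CommRing A] [HopfAlgebra k A]

local notation "S" => HopfAlgebra.antipode (R := k) (A := A)

/-- A representation of `comul 1`. -/
def oneRepr : Coalgebra.Repr k (1 : A) Unit where
  index := {()}
  left _ := 1
  right _ := 1
  eq := by
    simp only [Finset.sum_const, Finset.card_singleton, one_smul]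
    rw [show ((1:A) ⊗ₜ[k] (1:A)) = (1 : A ⊗[k] A) from rfl]
    exact (map_one (Bialgebra.comulAlgHom k A)).symm

lemma antipode_one' : S 1 = (1 : A) := by
  have h := HopfAlgebra.sum_antipode_mul_eq_algebraMap_counit (R := k) (oneRepr (k := k) (A := A))
  simpa [oneRepr] using h

/-- Representation of comul of a product, from representations of the factors. -/
def mulRepr {a b : A} {ι κ : Type} (r : Coalgebra.Repr k a ι) (s : Coalgebra.Repr k b κ) :
    Coalgebra.Repr k (a * b) (ι × κ) where
  index := r.index ×ˢ s.index
  left p := r.left p.1 * s.left p.2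
  right p := r.right p.1 * s.right p.2
  eq := by
    rw [Bialgebra.comul_mul (R := k) a b, ← r.eq, ← s.eq, Finset.sum_mul_sum]
    rw [Finset.sum_product]
    simp [Algebra.TensorProduct.tmul_mul_tmul]

lemma conv_id_antipode : conv LinearMap.id (S) = (convUnit : A →ₗ[k] A) := by
  ext a
  rw [conv_repr _ _ (ℛ k a), convUnit_apply]
  simpa using HopfAlgebra.sum_mul_antipode_eq_algebraMap_counit (R := k) (ℛ k a)

lemma conv_antipode_id : conv (S) LinearMap.id = (convUnit : A →ₗ[k] A) := by
  ext a
  rw [conv_repr _ _ (ℛ k a), convUnit_apply]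
  simpa using HopfAlgebra.sum_antipode_mul_eq_algebraMap_counit (R := k) (ℛ k a)

lemma comul_tmul' (a b : A) :
    Coalgebra.comul (R := k) (a ⊗ₜ[k] b) =
      TensorProduct.tensorTensorTensorComm k A A A A
        (Coalgebra.comul (R := k) a ⊗ₜ[k] Coalgebra.comul (R := k) b) := by
  have h := congrArg (fun f => f (a ⊗ₜ[k] b))
    congr($(Bialgebra.TensorProduct.comul_eq_algHom_toLinearMap k k A A).toFun)
  simpa using h

lemma counit_tmul' (a b : A) :
    Coalgebra.counit (R := k) (a ⊗ₜ[k] b) =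
      Coalgebra.counit (R := k) a * Coalgebra.counit (R := k) b := by
  have h := congrArg (fun f => f (a ⊗ₜ[k] b))
    congr($(Bialgebra.TensorProduct.counit_eq_algHom_toLinearMap k k A A).toFun)
  simpa [mul_comm] using h

/-- Representation of comul of a tensor. -/
def tmulRepr {a b : A} {ι κ : Type} (r : Coalgebra.Repr k a ι) (s : Coalgebra.Repr k b κ) :
    Coalgebra.Repr k (a ⊗ₜ[k] b : A ⊗[k] A) (ι × κ) where
  index := r.index ×ˢ s.index
  left p := r.left p.1 ⊗ₜ[k] s.left p.2
  right p := r.right p.1 ⊗ₜ[k] s.right p.2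
  eq := by
    rw [comul_tmul', ← r.eq, ← s.eq, TensorProduct.sum_tmul]
    rw [map_sum, Finset.sum_product]
    refine Finset.sum_congr rfl fun i _ => ?_
    rw [TensorProduct.tmul_sum, map_sum]
    refine Finset.sum_congr rfl fun j _ => ?_
    simp [TensorProduct.tensorTensorTensorComm_tmul]

theorem antipode_mul' (a b : A) : S (a * b) = S a * S b := by
  have key : (LinearMap.mul' k A ∘ₗ TensorProduct.map (S) (S) : A ⊗[k] A →ₗ[k] A)
      = (S) ∘ₗ LinearMap.mul' k A := by
    refine conv_unique (f := LinearMap.mul' k A) ?_ ?_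
    · -- conv (mul' ∘ map S S) (mul') = convUnit
      apply TensorProduct.ext'
      intro a b
      rw [conv_repr _ _ (tmulRepr (ℛ k a) (ℛ k b)), convUnit_apply, counit_tmul']
      simp only [tmulRepr, LinearMap.comp_apply, TensorProduct.map_tmul, LinearMap.mul'_apply]
      rw [Finset.sum_product]
      have : ∀ i ∈ (ℛ k a).index, ∀ j ∈ (ℛ k b).index,
          S ((ℛ k a).left i) * S ((ℛ k b).left j) *
            ((ℛ k a).right i * (ℛ k b).right j)
          = (S ((ℛ k a).left i) * (ℛ k a).right i) *
            (S ((ℛ k b).left j) * (ℛ k b).right j) := fun _ _ _ _ => by ring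
      rw [Finset.sum_congr rfl fun i hi => Finset.sum_congr rfl fun j hj => this i hi j hj]
      rw [← Finset.sum_mul_sum]
      rw [HopfAlgebra.sum_antipode_mul_eq_algebraMap_counit (R := k) (ℛ k a),
        HopfAlgebra.sum_antipode_mul_eq_algebraMap_counit (R := k) (ℛ k b), ← map_mul]
    · -- conv (mul') (S ∘ mul') = convUnit
      apply TensorProduct.ext'
      intro a b
      rw [conv_repr _ _ (tmulRepr (ℛ k a) (ℛ k b)), convUnit_apply, counit_tmul']
      simp only [tmulRepr, LinearMap.comp_apply, TensorProduct.map_tmul, LinearMap.mul'_apply]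
      have h := HopfAlgebra.sum_mul_antipode_eq_algebraMap_counit (R := k) (mulRepr (ℛ k a) (ℛ k b))
      simp only [mulRepr, Finset.sum_product] at h ⊢
      rw [h, Bialgebra.counit_mul]
  have := congrArg (fun f => f (a ⊗ₜ[k] b)) congr(($key).toFun)
  simpa using this.symm

end Antipode

section Antipode2
variable {A : Type} [CommRing A] [HopfAlgebra k A]
local notation "S" => HopfAlgebra.antipode (R := k) (A := A)

/-- The antipode as an algebra homomorphism. -/
def antipodeAlgHom : A →ₐ[k] A :=
  AlgHom.ofLinearMap (S) antipode_one' antipode_mul'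

lemma antipode_algebraMap' (c : k) : S (algebraMap k A c) = algebraMap k A c :=
  (antipodeAlgHom (k := k) (A := A)).commutes c

theorem antipode_antipode (a : A) : S (S a) = a := by
  have key : (LinearMap.id : A →ₗ[k] A) = (S) ∘ₗ (S) := by
    refine conv_unique (f := (S)) conv_id_antipode ?_
    ext a
    rw [conv_repr _ _ (ℛ k a), convUnit_apply]
    have : ∀ i ∈ (ℛ k a).index, S ((ℛ k a).left i) * S (S ((ℛ k a).right i))
        = S ((ℛ k a).left i * S ((ℛ k a).right i)) := fun i _ => (antipode_mul' _ _).symm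
    simp only [LinearMap.comp_apply]
    rw [Finset.sum_congr rfl this, ← map_sum,
      HopfAlgebra.sum_mul_antipode_eq_algebraMap_counit (R := k) (ℛ k a), antipode_algebraMap']
  exact (congrArg (fun f => f a) congr(($key).toFun)).symm

theorem comul_antipode :
    (Coalgebra.comul (R := k) (A := A)) ∘ₗ (S)
      = (TensorProduct.comm k A A).toLinearMap ∘ₗ TensorProduct.map (S) (S)
          ∘ₗ Coalgebra.comul := by
  -- convolution in Hom(A, A ⊗ A)
  set f : A →ₗ[k] A ⊗[k] A := Coalgebra.comul with hf
  set g : A →ₗ[k] A ⊗[k] A := Coalgebra.comul ∘ₗ (S) with hg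
  set h : A →ₗ[k] A ⊗[k] A :=
    (TensorProduct.comm k A A).toLinearMap ∘ₗ TensorProduct.map (S) (S) ∘ₗ Coalgebra.comul with hh
  have e2 : conv g f = convUnit := by
    ext a
    rw [conv_repr _ _ (ℛ k a), convUnit_apply]
    have : ∀ i ∈ (ℛ k a).index, g ((ℛ k a).left i) * f ((ℛ k a).right i)
        = Bialgebra.comulAlgHom k A (S ((ℛ k a).left i) * (ℛ k a).right i) := by
      intro i _
      simp [hg, hf, map_mul]
    rw [Finset.sum_congr rfl this, ← map_sum, HopfAlgebra.sum_antipode_mul_eq_algebraMap_counit (R := k) (ℛ k a)]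
    exact (Bialgebra.comulAlgHom k A).commutes _
  have e3 : conv f h = convUnit := by
    ext a
    set r := ℛ k a with hr
    set ρ : ∀ i, Coalgebra.Repr k (r.left i) (A × A) := fun i => ℛ k (r.left i) with hρ
    set σ : ∀ i, Coalgebra.Repr k (r.right i) (A × A) := fun i => ℛ k (r.right i) with hσ
    -- the map Ξ
    set Ξ : A ⊗[k] (A ⊗[k] A) →ₗ[k] A ⊗[k] A :=
      LinearMap.mul' k (A ⊗[k] A) ∘ₗ TensorProduct.map (Coalgebra.comul)
        (TensorProduct.map (S) (S) ∘ₗ (TensorProduct.comm k A A).toLinearMap) with hΞ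
    have key1 := congrArg Ξ (Coalgebra.sum_tmul_tmul_eq (R := k) r ρ σ)
    simp only [map_sum, hΞ, LinearMap.comp_apply, TensorProduct.map_tmul,
      TensorProduct.comm_tmul, LinearMap.mul'_apply, LinearEquiv.coe_coe] at key1
    -- key1 : ∑ i, ∑ j, comul ((ρ i).left j) * (S (r.right i) ⊗ₜ S ((ρ i).right j))
    --      = ∑ i, ∑ j, comul (r.left i) * (S ((σ i).right j) ⊗ₜ S ((σ i).left j))
    have lhs_eq : conv f h a
        = ∑ i ∈ r.index, ∑ j ∈ (ρ i).index,
            Coalgebra.comul (R := k) ((ρ i).left j) *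
              (S (r.right i) ⊗ₜ[k] S ((ρ i).right j)) := by
      rw [conv_repr _ _ r]
      rw [key1]
      refine Finset.sum_congr rfl fun i _ => ?_
      rw [hh]
      simp only [LinearMap.comp_apply]
      rw [← (σ i).eq]
      simp [Finset.mul_sum]
      rfl
    rw [lhs_eq, convUnit_apply]
    -- second coassociativity application, for each i
    have step2 : ∀ i ∈ r.index, ∑ j ∈ (ρ i).index,
        Coalgebra.comul (R := k) ((ρ i).left j) * (S (r.right i) ⊗ₜ[k] S ((ρ i).right j))
        = (r.left i * S (r.right i)) ⊗ₜ[k] 1 := by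
      intro i _
      set w := r.left i with hw
      set τ : ∀ j, Coalgebra.Repr k ((ρ i).right j) (A × A) := fun j => ℛ k ((ρ i).right j) with hτ
      set π : ∀ j, Coalgebra.Repr k ((ρ i).left j) (A × A) := fun j => ℛ k ((ρ i).left j) with hπ
      set Γ : A ⊗[k] (A ⊗[k] A) →ₗ[k] A ⊗[k] A :=
        TensorProduct.map (LinearMap.mulRight k (S (r.right i)))
          (LinearMap.mul' k A ∘ₗ LinearMap.lTensor A (S)) with hΓ
      have key2 := congrArg Γ (Coalgebra.sum_tmul_tmul_eq (R := k) (ρ i) π τ)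
      simp only [map_sum, hΓ, TensorProduct.map_tmul, LinearMap.mulRight_apply,
        LinearMap.comp_apply, LinearMap.lTensor_tmul, LinearMap.mul'_apply] at key2
      calc ∑ j ∈ (ρ i).index,
            Coalgebra.comul (R := k) ((ρ i).left j) * (S (r.right i) ⊗ₜ[k] S ((ρ i).right j))
          = ∑ j ∈ (ρ i).index, ∑ l ∈ (π j).index,
              ((π j).left l * S (r.right i)) ⊗ₜ[k] ((π j).right l * S ((ρ i).right j)) := by
            refine Finset.sum_congr rfl fun j _ => ?_
            rw [← (π j).eq, Finset.sum_mul]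
            simp [Algebra.TensorProduct.tmul_mul_tmul]
        _ = ∑ j ∈ (ρ i).index, ∑ l ∈ (τ j).index,
              ((ρ i).left j * S (r.right i)) ⊗ₜ[k] ((τ j).left l * S ((τ j).right l)) := key2
        _ = ∑ j ∈ (ρ i).index,
              ((ρ i).left j * S (r.right i)) ⊗ₜ[k]
                algebraMap k A (Coalgebra.counit (R := k) ((ρ i).right j)) := by
            refine Finset.sum_congr rfl fun j _ => ?_
            rw [← TensorProduct.tmul_sum, HopfAlgebra.sum_mul_antipode_eq_algebraMap_counit (R := k) (τ j)]
        _ = (r.left i * S (r.right i)) ⊗ₜ[k] 1 := by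
            have base := congrArg (LinearMap.rTensor A (LinearMap.mulRight k (S (r.right i)))
                ∘ₗ LinearMap.lTensor A (Algebra.linearMap k A))
              (Coalgebra.sum_tmul_counit_eq (R := k) (ρ i))
            simp only [map_sum, LinearMap.comp_apply, LinearMap.lTensor_tmul,
              LinearMap.rTensor_tmul, LinearMap.mulRight_apply, Algebra.linearMap_apply,
              map_one] at base
            exact base
    rw [Finset.sum_congr rfl step2, ← TensorProduct.sum_tmul,
      HopfAlgebra.sum_mul_antipode_eq_algebraMap_counit (R := k) r]
    rw [Algebra.TensorProduct.algebraMap_apply]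
  -- combine: g = h
  exact conv_unique (f := f) e2 e3

end Antipode2

section Con
variable {A : Type} [AddCommGroup A] [Module k A]
variable {M : Type} [AddCommGroup M] [Module k M]

/-- Contract the right tensor leg with a functional. -/
def rCon (f : A →ₗ[k] k) : M ⊗[k] A →ₗ[k] M :=
  (TensorProduct.rid k M).toLinearMap ∘ₗ LinearMap.lTensor M f

/-- Contract the left tensor leg with a functional. -/
def lCon (f : A →ₗ[k] k) : A ⊗[k] M →ₗ[k] M :=
  (TensorProduct.lid k M).toLinearMap ∘ₗ LinearMap.rTensor M f

@[simp] lemma rCon_tmul (f : A →ₗ[k] k) (x : M) (y : A) : rCon f (x ⊗ₜ[k] y) = f y • x := by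
  simp [rCon]

@[simp] lemma lCon_tmul (f : A →ₗ[k] k) (x : A) (y : M) : lCon f (x ⊗ₜ[k] y) = f x • y := by
  simp [lCon]

end Con

section FT
variable {A : Type} [AddCommGroup A] [Module k A] [Coalgebra k A]

/-- Right component operator. -/
def yR (f : A →ₗ[k] k) : A →ₗ[k] A := rCon f ∘ₗ Coalgebra.comul

/-- Left component operator. -/
def zL (f : A →ₗ[k] k) : A →ₗ[k] A := lCon f ∘ₗ Coalgebra.comul

lemma comul_comp_yR (f : A →ₗ[k] k) :
    Coalgebra.comul ∘ₗ yR f = LinearMap.lTensor A (yR f) ∘ₗ (Coalgebra.comul (R := k)) := by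
  have h1 : (Coalgebra.comul (R := k) (A := A)) ∘ₗ rCon f
      = rCon f ∘ₗ LinearMap.rTensor A (Coalgebra.comul (R := k) (A := A)) := by
    apply TensorProduct.ext'
    intro x y
    simp
  have h2 : (rCon (M := A ⊗[k] A) f)
      = LinearMap.lTensor A (rCon (M := A) f) ∘ₗ (TensorProduct.assoc k A A A).toLinearMap := by
    apply TensorProduct.ext_threefold
    intro x y z
    simp [TensorProduct.tmul_smul]
  calc Coalgebra.comul ∘ₗ yR f
      = (Coalgebra.comul ∘ₗ rCon f) ∘ₗ Coalgebra.comul := by rw [yR]; rfl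
    _ = rCon f ∘ₗ (LinearMap.rTensor A Coalgebra.comul ∘ₗ Coalgebra.comul) := by
        rw [h1]; rfl
    _ = LinearMap.lTensor A (rCon (M := A) f) ∘ₗ ((TensorProduct.assoc k A A A).toLinearMap
          ∘ₗ LinearMap.rTensor A Coalgebra.comul ∘ₗ Coalgebra.comul) := by
        rw [h2]; rfl
    _ = LinearMap.lTensor A (rCon (M := A) f)
          ∘ₗ (LinearMap.lTensor A Coalgebra.comul ∘ₗ Coalgebra.comul) := by
        rw [Coalgebra.coassoc]
    _ = LinearMap.lTensor A (yR f) ∘ₗ Coalgebra.comul := by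
        rw [yR, LinearMap.lTensor_comp]; rfl

lemma comul_comp_zL (f : A →ₗ[k] k) :
    Coalgebra.comul ∘ₗ zL f = LinearMap.rTensor A (zL f) ∘ₗ (Coalgebra.comul (R := k)) := by
  have h1 : (Coalgebra.comul (R := k) (A := A)) ∘ₗ lCon f
      = lCon f ∘ₗ LinearMap.lTensor A (Coalgebra.comul (R := k) (A := A)) := by
    apply TensorProduct.ext'
    intro x y
    simp
  have h2 : (lCon (M := A ⊗[k] A) f)
      = LinearMap.rTensor A (lCon (M := A) f) ∘ₗ (TensorProduct.assoc k A A A).symm.toLinearMap := by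
    apply TensorProduct.ext'
    intro x t
    induction t using TensorProduct.induction_on with
    | zero => simp
    | tmul y z => simp [TensorProduct.smul_tmul']
    | add u v hu hv =>
        simp only [TensorProduct.tmul_add, map_add, hu, hv]
  calc Coalgebra.comul ∘ₗ zL f
      = (Coalgebra.comul ∘ₗ lCon f) ∘ₗ Coalgebra.comul := by rw [zL]; rfl
    _ = lCon f ∘ₗ (LinearMap.lTensor A Coalgebra.comul ∘ₗ Coalgebra.comul) := by
        rw [h1]; rfl
    _ = LinearMap.rTensor A (lCon (M := A) f) ∘ₗ ((TensorProduct.assoc k A A A).symm.toLinearMap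
          ∘ₗ LinearMap.lTensor A Coalgebra.comul ∘ₗ Coalgebra.comul) := by
        rw [h2]; rfl
    _ = LinearMap.rTensor A (lCon (M := A) f)
          ∘ₗ (LinearMap.rTensor A Coalgebra.comul ∘ₗ Coalgebra.comul) := by
        rw [Coalgebra.coassoc_symm]
    _ = LinearMap.rTensor A (zL f) ∘ₗ Coalgebra.comul := by
        rw [zL, LinearMap.rTensor_comp]; rfl

variable (bA : Module.Basis (Module.Basis.ofVectorSpaceIndex k A) k A)

lemma right_expansion {ι : Type} (b : Module.Basis ι k A) (t : A ⊗[k] A) :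
    ∃ s : Finset ι, (∀ j ∉ s, rCon (b.coord j) t = (0 : A)) ∧
      t = ∑ j ∈ s, (rCon (b.coord j) t) ⊗ₜ[k] b j := by
  induction t using TensorProduct.induction_on with
  | zero => exact ⟨∅, by simp⟩
  | tmul x y =>
      refine ⟨(b.repr y).support, fun j hj => ?_, ?_⟩
      · simp [Module.Basis.coord_apply, Finsupp.notMem_support_iff.mp hj]
      · have : ∀ j ∈ (b.repr y).support,
            (rCon (b.coord j) (x ⊗ₜ[k] y)) ⊗ₜ[k] b j = x ⊗ₜ[k] (b.repr y j • b j) := by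
          intro j _
          simp [Module.Basis.coord_apply, TensorProduct.smul_tmul, TensorProduct.tmul_smul]
        rw [Finset.sum_congr rfl this, ← TensorProduct.tmul_sum]
        congr 1
        conv_lhs => rw [← b.linearCombination_repr y]
        rw [Finsupp.linearCombination_apply, Finsupp.sum]
  | add u v hu hv =>
      classical
      obtain ⟨su, hu0, hu1⟩ := hu
      obtain ⟨sv, hv0, hv1⟩ := hv
      refine ⟨su ∪ sv, fun j hj => ?_, ?_⟩
      · rw [map_add, hu0 j (fun h => hj (Finset.mem_union_left _ h)),
          hv0 j (fun h => hj (Finset.mem_union_right _ h)), add_zero]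
      · have : ∀ j ∈ su ∪ sv, (rCon (b.coord j) (u + v)) ⊗ₜ[k] b j
            = (rCon (b.coord j) u) ⊗ₜ[k] b j + (rCon (b.coord j) v) ⊗ₜ[k] b j := by
          intro j _
          rw [map_add, TensorProduct.add_tmul]
        rw [Finset.sum_congr rfl this, Finset.sum_add_distrib]
        congr 1
        · rw [← Finset.sum_subset Finset.subset_union_left
            (fun j _ hj => by rw [hu0 j hj, TensorProduct.zero_tmul])]
          exact hu1
        · rw [← Finset.sum_subset Finset.subset_union_right
            (fun j _ hj => by rw [hv0 j hj, TensorProduct.zero_tmul])]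
          exact hv1

lemma left_expansion {ι : Type} (b : Module.Basis ι k A) (t : A ⊗[k] A) :
    ∃ s : Finset ι, (∀ i ∉ s, lCon (b.coord i) t = (0 : A)) ∧
      t = ∑ i ∈ s, b i ⊗ₜ[k] (lCon (b.coord i) t) := by
  induction t using TensorProduct.induction_on with
  | zero => exact ⟨∅, by simp⟩
  | tmul x y =>
      refine ⟨(b.repr x).support, fun i hi => ?_, ?_⟩
      · simp [Module.Basis.coord_apply, Finsupp.notMem_support_iff.mp hi]
      · have : ∀ i ∈ (b.repr x).support,
            b i ⊗ₜ[k] (lCon (b.coord i) (x ⊗ₜ[k] y)) = (b.repr x i • b i) ⊗ₜ[k] y := by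
          intro i _
          simp [Module.Basis.coord_apply, TensorProduct.smul_tmul, TensorProduct.tmul_smul]
        rw [Finset.sum_congr rfl this, ← TensorProduct.sum_tmul]
        congr 1
        conv_lhs => rw [← b.linearCombination_repr x]
        rw [Finsupp.linearCombination_apply, Finsupp.sum]
  | add u v hu hv =>
      classical
      obtain ⟨su, hu0, hu1⟩ := hu
      obtain ⟨sv, hv0, hv1⟩ := hv
      refine ⟨su ∪ sv, fun i hi => ?_, ?_⟩
      · rw [map_add, hu0 i (fun h => hi (Finset.mem_union_left _ h)),
          hv0 i (fun h => hi (Finset.mem_union_right _ h)), add_zero]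
      · have : ∀ i ∈ su ∪ sv, b i ⊗ₜ[k] (lCon (b.coord i) (u + v))
            = b i ⊗ₜ[k] (lCon (b.coord i) u) + b i ⊗ₜ[k] (lCon (b.coord i) v) := by
          intro i _
          rw [map_add, TensorProduct.tmul_add]
        rw [Finset.sum_congr rfl this, Finset.sum_add_distrib]
        congr 1
        · rw [← Finset.sum_subset Finset.subset_union_left
            (fun i _ hi => by rw [hu0 i hi, TensorProduct.tmul_zero])]
          exact hu1
        · rw [← Finset.sum_subset Finset.subset_union_right
            (fun i _ hi => by rw [hv0 i hi, TensorProduct.tmul_zero])]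
          exact hv1

end FT

section FT2
variable {A : Type} [AddCommGroup A] [Module k A] [Coalgebra k A]

theorem exists_fd_subcoalgebra (a : A) :
    ∃ V : Submodule k A, V.FG ∧ a ∈ V ∧
      ∀ v ∈ V, Coalgebra.comul (R := k) v ∈
        LinearMap.range (TensorProduct.map V.subtype V.subtype) := by
  classical
  set b := Module.Basis.ofVectorSpace k A with hb
  set z : _ → A := fun i => zL (b.coord i) a with hzdef
  set x : _ → _ → A := fun i j => yR (b.coord j) (z i) with hxdef
  set V := Submodule.span k {w | ∃ i j, w = x i j} with hV
  have hxV : ∀ i j, x i j ∈ V := fun i j => Submodule.subset_span ⟨i, j, rfl⟩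
  -- left expansion of comul a
  obtain ⟨s, hs0, hs1⟩ := left_expansion (k := k) b (Coalgebra.comul (R := k) a)
  have hs1' : Coalgebra.comul (R := k) a = ∑ i ∈ s, b i ⊗ₜ[k] z i := hs1
  -- right expansions
  have hre : ∀ w : A, ∃ t : Finset _, Coalgebra.comul (R := k) w
      = ∑ j ∈ t, (yR (b.coord j) w) ⊗ₜ[k] b j := by
    intro w
    obtain ⟨t, _, h1⟩ := right_expansion (k := k) b (Coalgebra.comul (R := k) w)
    exact ⟨t, h1⟩
  choose T hT using hre
  -- membership of the z i in V
  have hzV : ∀ i, z i ∈ V := by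
    intro i
    have h1 := Coalgebra.lTensor_counit_comul (R := k) (z i)
    rw [hT (z i)] at h1
    have h2 := congrArg (TensorProduct.rid k A) h1
    simp only [map_sum, LinearMap.lTensor_tmul, TensorProduct.rid_tmul, one_smul] at h2
    rw [← h2]
    exact Submodule.sum_mem _ fun j _ => Submodule.smul_mem _ _ (hxV i j)
  have haV : a ∈ V := by
    have h1 := Coalgebra.rTensor_counit_comul (R := k) a
    rw [hs1'] at h1
    have h2 := congrArg (TensorProduct.lid k A) h1
    simp only [map_sum, LinearMap.rTensor_tmul, TensorProduct.lid_tmul, one_smul] at h2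
    rw [← h2]
    exact Submodule.sum_mem _ fun i _ => Submodule.smul_mem _ _ (hzV i)
  -- finite generation
  have hyRmem : ∀ (w : A) j, yR (b.coord j) w ∈
      Submodule.span k ((ℛ k w).left '' ↑(ℛ k w).index) := by
    intro w j
    have : yR (b.coord j) w = ∑ m ∈ (ℛ k w).index,
        (b.coord j) ((ℛ k w).right m) • (ℛ k w).left m := by
      rw [yR, LinearMap.comp_apply, ← (ℛ k w).eq, map_sum]
      simp
    rw [this]
    exact Submodule.sum_mem _ fun m hm => Submodule.smul_mem _ _
      (Submodule.subset_span ⟨m, hm, rfl⟩)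
  have hzmem : ∀ i, z i = ∑ m ∈ (ℛ k a).index,
      (b.coord i) ((ℛ k a).left m) • (ℛ k a).right m := by
    intro i
    rw [hzdef]
    simp only [zL, LinearMap.comp_apply, ← (ℛ k a).eq, map_sum]
    simp
  set S : Set A := ⋃ m ∈ (↑(ℛ k a).index : Set _),
      ((ℛ k (((ℛ k a).right m))).left '' ↑(ℛ k ((ℛ k a).right m)).index) with hS
  have hSfin : S.Finite :=
    Set.Finite.biUnion ((ℛ k a).index.finite_toSet)
      (fun m _ => Set.Finite.image _ ((ℛ k ((ℛ k a).right m)).index.finite_toSet))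
  have hVle : V ≤ Submodule.span k S := by
    rw [hV, Submodule.span_le]
    rintro w ⟨i, j, rfl⟩
    rw [hxdef]
    simp only
    rw [show yR (b.coord j) (z i) = ∑ m ∈ (ℛ k a).index,
        (b.coord i) ((ℛ k a).left m) • yR (b.coord j) ((ℛ k a).right m) by
      rw [hzmem i, map_sum]; simp]
    refine Submodule.sum_mem _ fun m hm => Submodule.smul_mem _ _ ?_
    have hsub : ((ℛ k (((ℛ k a).right m))).left '' ↑(ℛ k ((ℛ k a).right m)).index) ⊆ S :=
      Set.subset_biUnion_of_mem (u := fun m => ((ℛ k (((ℛ k a).right m))).left ''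
        ↑(ℛ k ((ℛ k a).right m)).index)) (show m ∈ (↑(ℛ k a).index : Set _) from hm)
    exact Submodule.span_mono hsub (hyRmem ((ℛ k a).right m) j)
  have hVfg : V.FG := by
    haveI : FiniteDimensional k (Submodule.span k S) := FiniteDimensional.span_of_finite k hSfin
    haveI : FiniteDimensional k V := Submodule.finiteDimensional_of_le hVle
    exact (Submodule.fg_iff_finiteDimensional V).mpr ‹_›
  -- the comultiplication condition
  refine ⟨V, hVfg, haV, ?_⟩
  have claim3a : ∀ i j, Coalgebra.comul (R := k) (x i j) ∈
      LinearMap.range (LinearMap.rTensor A V.subtype) := by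
    intro i j
    have h1 : Coalgebra.comul (R := k) (x i j)
        = LinearMap.lTensor A (yR (b.coord j)) (Coalgebra.comul (R := k) (z i)) :=
      congrArg (fun f => f (z i)) congr(($(comul_comp_yR (k := k) (b.coord j))).toFun)
    rw [h1, hT (z i), map_sum]
    simp only [LinearMap.lTensor_tmul]
    refine Submodule.sum_mem _ fun j' _ => ?_
    exact ⟨(⟨x i j', hxV i j'⟩ : V) ⊗ₜ[k] (yR (b.coord j) (b j')), rfl⟩
  have claim3b : ∀ i j, Coalgebra.comul (R := k) (x i j) ∈
      LinearMap.range (LinearMap.lTensor A V.subtype) := by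
    intro i j
    have h1 : Coalgebra.comul (R := k) (x i j)
        = LinearMap.lTensor A (yR (b.coord j)) (Coalgebra.comul (R := k) (z i)) :=
      congrArg (fun f => f (z i)) congr(($(comul_comp_yR (k := k) (b.coord j))).toFun)
    have h2 : Coalgebra.comul (R := k) (z i)
        = LinearMap.rTensor A (zL (b.coord i)) (Coalgebra.comul (R := k) a) :=
      congrArg (fun f => f a) congr(($(comul_comp_zL (k := k) (b.coord i))).toFun)
    rw [h1, h2, hs1', map_sum, map_sum]
    simp only [LinearMap.rTensor_tmul, LinearMap.lTensor_tmul]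
    refine Submodule.sum_mem _ fun i' _ => ?_
    exact ⟨(zL (b.coord i) (b i')) ⊗ₜ[k] (⟨x i' j, hxV i' j⟩ : V), rfl⟩
  have claim3c : ∀ v ∈ V, Coalgebra.comul (R := k) v ∈
      LinearMap.range (LinearMap.rTensor A V.subtype) ⊓
      LinearMap.range (LinearMap.lTensor A V.subtype) := by
    intro v hv
    have : V ≤ Submodule.comap (Coalgebra.comul (R := k) (A := A))
        (LinearMap.range (LinearMap.rTensor A V.subtype) ⊓
          LinearMap.range (LinearMap.lTensor A V.subtype)) := by
      rw [hV, Submodule.span_le]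
      rintro w ⟨i, j, rfl⟩
      exact ⟨claim3a i j, claim3b i j⟩
    exact this hv
  intro v hv
  obtain ⟨⟨u1, hu1⟩, ⟨u2, hu2⟩⟩ := claim3c v hv
  obtain ⟨W, hW⟩ := V.exists_isCompl
  set p := Submodule.projectionOnto V W hW with hp
  refine ⟨LinearMap.lTensor V p u1, ?_⟩
  have step1 : TensorProduct.map V.subtype V.subtype (LinearMap.lTensor V p u1)
      = LinearMap.lTensor A (V.subtype ∘ₗ p) (LinearMap.rTensor A V.subtype u1) := by
    rw [← LinearMap.comp_apply, ← LinearMap.comp_apply]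
    congr 1
    apply TensorProduct.ext'
    intro u v
    simp
  rw [step1, hu1, ← hu2, ← LinearMap.comp_apply, ← LinearMap.lTensor_comp]
  have hps : (V.subtype ∘ₗ p) ∘ₗ V.subtype = V.subtype := by
    ext u
    simp [hp, Submodule.projectionOnto_apply_left]
  rw [hps, hu2]

end FT2

section HS
variable {A : Type} [CommRing A] [HopfAlgebra k A]

lemma range_map_le_range_map {V W : Type} [AddCommGroup V] [Module k V]
    [AddCommGroup W] [Module k W] {f : V →ₗ[k] A} {g : W →ₗ[k] A}
    (e : V →ₗ[k] W) (he : g ∘ₗ e = f) :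
    LinearMap.range (TensorProduct.map f f) ≤ LinearMap.range (TensorProduct.map g g) := by
  rintro t ⟨u, rfl⟩
  exact ⟨TensorProduct.map e e u, by
    rw [← LinearMap.comp_apply, ← TensorProduct.map_comp, he]⟩

lemma comm_map_map {V : Type} [AddCommGroup V] [Module k V] (f : V →ₗ[k] A) (t : V ⊗[k] V) :
    (TensorProduct.comm k A A) (TensorProduct.map f f t)
      = TensorProduct.map f f ((TensorProduct.comm k V V) t) := by
  induction t using TensorProduct.induction_on with
  | zero => simp
  | tmul x y => simp
  | add u v hu hv => simp [hu, hv]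

set_option synthInstance.maxHeartbeats 1000000 in
set_option maxHeartbeats 1000000 in
lemma algTensorMap_apply (B : Subalgebra k A) (u : B ⊗[k] B) :
    (Algebra.TensorProduct.map B.val B.val) u
      = TensorProduct.map B.val.toLinearMap B.val.toLinearMap u := by
  induction u using TensorProduct.induction_on with
  | zero => rw [map_zero, map_zero]
  | tmul x y => rfl
  | add x y hx hy => rw [map_add, map_add, hx, hy]

lemma mem_algRange_iff {B : Subalgebra k A} {x : A ⊗[k] A} :
    x ∈ (Algebra.TensorProduct.map B.val B.val).range ↔
      x ∈ LinearMap.range (TensorProduct.map B.val.toLinearMap B.val.toLinearMap) := by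
  constructor
  · rintro ⟨u, rfl⟩
    exact ⟨u, (algTensorMap_apply B u).symm⟩
  · rintro ⟨u, rfl⟩
    exact ⟨u, algTensorMap_apply B u⟩

theorem exists_fg_hopf (a : A) : ∃ B : Subalgebra k A, B.FG ∧ a ∈ B ∧ IsHopfSubalgebra B := by
  obtain ⟨V, hVfg, haV, hVΔ⟩ := exists_fd_subcoalgebra (k := k) a
  set Sl : A →ₗ[k] A := HopfAlgebra.antipode (R := k) with hSl
  set V' : Submodule k A := V ⊔ V.map Sl with hV'
  have hVle : V ≤ V' := le_sup_left
  have hV'fg : V'.FG := Submodule.FG.sup hVfg (Submodule.FG.map _ hVfg)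
  have hSS : Sl ∘ₗ Sl = LinearMap.id := by
    ext w; exact antipode_antipode w
  have hSV' : ∀ w ∈ V', Sl w ∈ V' := by
    intro w hw
    have h1 : V'.map Sl ≤ V' := by
      rw [hV', Submodule.map_sup, ← Submodule.map_comp, hSS, Submodule.map_id]
      exact sup_le (le_sup_right) (le_sup_left)
    exact h1 ⟨w, hw, rfl⟩
  -- comultiplication stability of V'
  have hSmemV' : ∀ v : V, Sl (V.subtype v) ∈ V' := fun v =>
    hSV' _ (hVle v.2)
  set g : V →ₗ[k] V' := LinearMap.codRestrict V' (Sl ∘ₗ V.subtype) hSmemV' with hg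
  have hge : V'.subtype ∘ₗ g = Sl ∘ₗ V.subtype := rfl
  have hΔV' : ∀ w ∈ V', Coalgebra.comul (R := k) w ∈
      LinearMap.range (TensorProduct.map V'.subtype V'.subtype) := by
    have hmain : V' ≤ Submodule.comap (Coalgebra.comul (R := k) (A := A))
        (LinearMap.range (TensorProduct.map V'.subtype V'.subtype)) := by
      rw [hV']
      refine sup_le ?_ ?_
      · intro v hv
        exact range_map_le_range_map (Submodule.inclusion hVle)
          (by ext u; rfl) (hVΔ v hv)
      · rintro w ⟨v, hv, rfl⟩
        have h1 : Coalgebra.comul (R := k) (Sl v)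
            = (TensorProduct.comm k A A)
                (TensorProduct.map Sl Sl (Coalgebra.comul (R := k) v)) :=
          congrArg (fun f => f v) congr(($(comul_antipode (k := k) (A := A))).toFun)
        obtain ⟨u, hu⟩ := hVΔ v hv
        have h2 : TensorProduct.map Sl Sl (Coalgebra.comul (R := k) v)
            = TensorProduct.map V'.subtype V'.subtype (TensorProduct.map g g u) := by
          rw [← hu, ← LinearMap.comp_apply, ← LinearMap.comp_apply,
            ← TensorProduct.map_comp, ← TensorProduct.map_comp, hge]
        simp only [Submodule.mem_comap]
        rw [h1, h2, comm_map_map]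
        exact ⟨_, rfl⟩
    exact fun w hw => hmain hw
  -- now build the subalgebra
  refine ⟨Algebra.adjoin k (V' : Set A), ?_, ?_, ?_, ?_⟩
  · obtain ⟨t, ht⟩ := hV'fg
    exact ⟨t, by rw [← Algebra.adjoin_span, ht]⟩
  · exact Algebra.subset_adjoin (hVle haV)
  · -- comul condition
    set B := Algebra.adjoin k (V' : Set A) with hB
    have hsub : (V' : Set A) ⊆ B := Algebra.subset_adjoin
    set e : V' →ₗ[k] B := LinearMap.codRestrict (Subalgebra.toSubmodule B)
      V'.subtype (fun v => hsub v.2) with he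
    have hBe : B.val.toLinearMap ∘ₗ e = V'.subtype := rfl
    have halg : B ≤ Subalgebra.comap (Bialgebra.comulAlgHom k A)
        ((Algebra.TensorProduct.map B.val B.val).range) := by
      rw [hB]
      refine Algebra.adjoin_le ?_
      intro v hv
      exact mem_algRange_iff.mpr (range_map_le_range_map e hBe (hΔV' v hv))
    intro b hb
    exact mem_algRange_iff.mp (halg hb)
  · -- antipode condition
    intro b hb
    have h1 : (Algebra.adjoin k (V' : Set A)).map (antipodeAlgHom (k := k) (A := A))
        ≤ Algebra.adjoin k (V' : Set A) := by
      rw [AlgHom.map_adjoin]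
      refine Algebra.adjoin_le ?_
      rintro _ ⟨w, hw, rfl⟩
      exact Algebra.subset_adjoin (hSV' w hw)
    exact h1 ⟨b, hb, rfl⟩

lemma isHopf_bot : ((⊥ : Subalgebra k A).FG) ∧ IsHopfSubalgebra (k := k) (⊥ : Subalgebra k A) := by
  refine ⟨⟨∅, by simp [Algebra.adjoin_empty]⟩, ?_, ?_⟩
  · intro b hb
    obtain ⟨c, rfl⟩ := Algebra.mem_bot.mp hb
    refine ⟨(⟨algebraMap k A c, Algebra.mem_bot.mpr ⟨c, rfl⟩⟩ : (⊥ : Subalgebra k A))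
      ⊗ₜ[k] (⟨1, one_mem _⟩ : (⊥ : Subalgebra k A)), ?_⟩
    rw [Bialgebra.comul_algebraMap, Algebra.TensorProduct.algebraMap_apply]
    rfl
  · intro b hb
    obtain ⟨c, rfl⟩ := Algebra.mem_bot.mp hb
    rw [show HopfAlgebra.antipode (R := k) (algebraMap k A c) = algebraMap k A c from
      (antipodeAlgHom (k := k) (A := A)).commutes c]
    exact Algebra.mem_bot.mpr ⟨c, rfl⟩

lemma isHopf_sup {B₁ B₂ : Subalgebra k A} (h₁ : IsHopfSubalgebra (k := k) B₁)
    (h₂ : IsHopfSubalgebra (k := k) B₂) : IsHopfSubalgebra (k := k) (B₁ ⊔ B₂) := by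
  constructor
  · have key : ∀ (B : Subalgebra k A), B ≤ B₁ ⊔ B₂ →
        (∀ b ∈ B, Coalgebra.comul (R := k) b ∈
          LinearMap.range (TensorProduct.map B.val.toLinearMap B.val.toLinearMap)) →
        B ≤ Subalgebra.comap (Bialgebra.comulAlgHom k A)
          ((Algebra.TensorProduct.map (B₁ ⊔ B₂).val (B₁ ⊔ B₂).val).range) := by
      intro B hle hΔ b hb
      set e : B →ₗ[k] (B₁ ⊔ B₂ : Subalgebra k A) := LinearMap.codRestrict
        (Subalgebra.toSubmodule (B₁ ⊔ B₂)) B.val.toLinearMap (fun v => hle v.2) with he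
      exact mem_algRange_iff.mpr
        (range_map_le_range_map e (by ext u; rfl) (hΔ b hb))
    have : B₁ ⊔ B₂ ≤ Subalgebra.comap (Bialgebra.comulAlgHom k A)
        ((Algebra.TensorProduct.map (B₁ ⊔ B₂).val (B₁ ⊔ B₂).val).range) :=
      sup_le (key B₁ le_sup_left h₁.1) (key B₂ le_sup_right h₂.1)
    intro b hb
    exact mem_algRange_iff.mp (this hb)
  · intro b hb
    have h1 : (B₁ ⊔ B₂).map (antipodeAlgHom (k := k) (A := A)) ≤ B₁ ⊔ B₂ := by
      rw [Algebra.map_sup]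
      refine sup_le ?_ ?_
      · refine le_trans ?_ (le_sup_left (b := B₂))
        rintro _ ⟨w, hw, rfl⟩
        exact h₁.2 w hw
      · refine le_trans ?_ (le_sup_right (a := B₁))
        rintro _ ⟨w, hw, rfl⟩
        exact h₂.2 w hw
    exact h1 ⟨b, hb, rfl⟩

end HS

section Card
variable {A : Type} [CommRing A] [Algebra k A]

lemma mk_closure_le (S : Set A) :
    Cardinal.mk (Submonoid.closure S : Set A) ≤ max ℵ₀ (Cardinal.mk S) := by
  classical
  have hsurj : ∀ x : (Submonoid.closure S : Set A), ∃ l : List S,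
      ((l.map (fun y : S => (y : A))).prod) = (x : A) := by
    rintro ⟨x, hx⟩
    obtain ⟨l, hl1, hl2⟩ := Submonoid.exists_list_of_mem_closure hx
    refine ⟨l.pmap (fun y hy => (⟨y, hy⟩ : S)) hl1, ?_⟩
    simp only [List.map_pmap]
    rw [List.pmap_eq_map]
    simpa using hl2
  have h1 : Cardinal.mk (Submonoid.closure S : Set A) ≤ Cardinal.mk (List S) := by
    set φ : List S → A := fun l => (l.map (fun y : S => (y : A))).prod with hφ
    have hmem : ∀ l : List S, φ l ∈ Submonoid.closure S := by
      intro l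
      refine Submonoid.list_prod_mem _ ?_
      intro x hx
      simp only [hφ, List.mem_map] at hx
      obtain ⟨y, _, rfl⟩ := hx
      exact Submonoid.subset_closure y.2
    refine Cardinal.mk_le_of_surjective (f := fun l : List S =>
      (⟨φ l, hmem l⟩ : (Submonoid.closure S : Set A))) ?_
    rintro x
    obtain ⟨l, hl⟩ := hsurj x
    exact ⟨l, Subtype.ext hl⟩
  exact h1.trans (Cardinal.mk_list_le_max _)

lemma rank_adjoin_le (S : Set A) :
    Module.rank k (Subalgebra.toSubmodule (Algebra.adjoin k S)) ≤ max ℵ₀ (Cardinal.mk S) := by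
  rw [Algebra.adjoin_eq_span]
  exact (rank_span_le _).trans (mk_closure_le S)

lemma rank_le_of_adjoin_eq_top {S : Set A} (h : Algebra.adjoin k S = ⊤) :
    Module.rank k A ≤ max ℵ₀ (Cardinal.mk S) := by
  have := rank_adjoin_le (k := k) S
  rw [h] at this
  rwa [show Subalgebra.toSubmodule (⊤ : Subalgebra k A) = ⊤ from rfl, rank_top] at this

lemma adjoin_basis_eq_top : Algebra.adjoin k (Module.Basis.ofVectorSpaceIndex k A) = ⊤ := by
  have h1 : Submodule.span k (Module.Basis.ofVectorSpaceIndex k A) = ⊤ := by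
    have := (Module.Basis.ofVectorSpace k A).span_eq
    rwa [Module.Basis.range_ofVectorSpace] at this
  have h2 : Subalgebra.toSubmodule (Algebra.adjoin k ((Module.Basis.ofVectorSpaceIndex k A) : Set A))
      = ⊤ := by
    rw [eq_top_iff, ← h1, Submodule.span_le]
    intro x hx
    exact Algebra.subset_adjoin hx
  exact Algebra.toSubmodule_eq_top.mp h2

lemma aleph0_le_rank_of_not_fg (h : ¬ (⊤ : Subalgebra k A).FG) : ℵ₀ ≤ Module.rank k A := by
  by_contra hlt
  push_neg at hlt
  have hfin := Module.Basis.finite_ofVectorSpaceIndex_of_rank_lt_aleph0 (K := k) (V := A) hlt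
  exact h ⟨hfin.toFinset, by rw [Set.Finite.coe_toFinset]; exact adjoin_basis_eq_top⟩

lemma subalgebra_fg_sup {B₁ B₂ : Subalgebra k A} (h₁ : B₁.FG) (h₂ : B₂.FG) : (B₁ ⊔ B₂).FG := by
  classical
  obtain ⟨s, hs⟩ := h₁
  obtain ⟨t, ht⟩ := h₂
  exact ⟨s ∪ t, by rw [Finset.coe_union, Algebra.adjoin_union, hs, ht]⟩

end Card

section Main
variable {A : Type} [CommRing A] [HopfAlgebra k A]

lemma exists_fg_hopf_finset (t : Finset A) :
    ∃ B : Subalgebra k A, B.FG ∧ IsHopfSubalgebra (k := k) B ∧ ∀ x ∈ t, x ∈ B := by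
  classical
  induction t using Finset.induction_on with
  | empty => exact ⟨⊥, isHopf_bot.1, isHopf_bot.2, by simp⟩
  | @insert a t ha IH =>
      obtain ⟨B', hB'fg, hB'h, hB'mem⟩ := IH
      obtain ⟨Ba, hBafg, hBamem, hBah⟩ := exists_fg_hopf (k := k) a
      refine ⟨Ba ⊔ B', subalgebra_fg_sup hBafg hB'fg, isHopf_sup hBah hB'h, ?_⟩
      intro x hx
      rcases Finset.mem_insert.mp hx with rfl | hx
      · exact le_sup_left (α := Subalgebra k A) hBamem
      · exact le_sup_right (α := Subalgebra k A) (hB'mem x hx)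

theorem stmt_two (hnfg : ¬ (⊤ : Subalgebra k A).FG) :
    Module.rank k A =
      sInf {c : Cardinal | ∃ S : Set A, Cardinal.mk S = c ∧ Algebra.adjoin k S = ⊤} := by
  have hrank : ℵ₀ ≤ Module.rank k A := aleph0_le_rank_of_not_fg hnfg
  apply le_antisymm
  · refine le_csInf ⟨Module.rank k A, (Module.Basis.ofVectorSpaceIndex k A), ?_, adjoin_basis_eq_top⟩ ?_
    · exact (Module.Basis.ofVectorSpace k A).mk_eq_rank''
    · rintro c ⟨S, rfl, hS⟩
      have hSinf : ℵ₀ ≤ Cardinal.mk S := by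
        by_contra hlt
        push_neg at hlt
        have hfin : S.Finite := by
          rw [← Set.not_infinite]
          intro hinf
          exact absurd (Cardinal.infinite_iff.mp hinf.to_subtype) (not_le.mpr hlt)
        exact hnfg ⟨hfin.toFinset, by rw [Set.Finite.coe_toFinset, hS]⟩
      have := rank_le_of_adjoin_eq_top (k := k) hS
      rwa [max_eq_right hSinf] at this
  · refine csInf_le ?_ ⟨(Module.Basis.ofVectorSpaceIndex k A), (Module.Basis.ofVectorSpace k A).mk_eq_rank'',
      adjoin_basis_eq_top⟩
    exact ⟨0, fun c _ => zero_le⟩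

theorem stmt_three (hnfg : ¬ (⊤ : Subalgebra k A).FG) :
    Module.rank k A =
      sInf {c : Cardinal | ∃ (ι : Type) (B : ι → Subalgebra k A),
        Cardinal.mk ι = c ∧ (∀ i, (B i).FG) ∧ (∀ i, IsHopfSubalgebra (k := k) (B i)) ∧
        Directed (· ≤ ·) B ∧ ∀ a : A, ∃ i, a ∈ B i} := by
  classical
  have hrank : ℵ₀ ≤ Module.rank k A := aleph0_le_rank_of_not_fg hnfg
  set κ := ↥(Module.Basis.ofVectorSpaceIndex k A) with hκ
  set bas : Module.Basis κ k A := Module.Basis.ofVectorSpace k A with hbas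
  have hκcard : Cardinal.mk κ = Module.rank k A := bas.mk_eq_rank''
  haveI : Infinite κ := Cardinal.infinite_iff.mpr (by rw [hκcard]; exact hrank)
  -- the witnessing family
  have hchoose : ∀ s : Finset κ, ∃ B : Subalgebra k A,
      B.FG ∧ IsHopfSubalgebra (k := k) B ∧ ∀ x ∈ s.image (bas ·), x ∈ B := fun s =>
    exists_fg_hopf_finset _
  choose D₀ hD₀fg hD₀h hD₀mem using hchoose
  obtain ⟨D, hD⟩ : ∃ D : Finset κ → Subalgebra k A, D = fun s => s.powerset.sup D₀ := ⟨_, rfl⟩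
  have hDP : ∀ s, (D s).FG ∧ IsHopfSubalgebra (k := k) (D s) := by
    intro s
    rw [hD]
    refine Finset.sup_induction (p := fun (B : Subalgebra k A) => Subalgebra.FG B ∧ IsHopfSubalgebra (k := k) B)
      ⟨isHopf_bot.1, isHopf_bot.2⟩ ?_ ?_
    · rintro B₁ ⟨h1, h2⟩ B₂ ⟨h3, h4⟩
      exact ⟨subalgebra_fg_sup h1 h3, isHopf_sup h2 h4⟩
    · exact fun t _ => ⟨hD₀fg t, hD₀h t⟩
  have hDmono : ∀ s t : Finset κ, s ⊆ t → D s ≤ D t := by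
    rw [hD]
    exact fun s t hst => Finset.sup_mono (Finset.powerset_mono.mpr hst)
  have hDdir : Directed (· ≤ ·) D := fun s t =>
    ⟨s ∪ t, hDmono _ _ Finset.subset_union_left, hDmono _ _ Finset.subset_union_right⟩
  have hDcover : ∀ a : A, ∃ s, a ∈ D s := by
    intro a
    refine ⟨(bas.repr a).support, ?_⟩
    have hbasmem : ∀ i ∈ (bas.repr a).support, bas i ∈ D (bas.repr a).support := by
      intro i hi
      have h1 : bas i ∈ D₀ (bas.repr a).support :=
        hD₀mem _ _ (Finset.mem_image_of_mem _ hi)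
      rw [hD]
      exact Finset.le_sup (f := D₀) (Finset.mem_powerset_self _) h1
    have : a = ∑ i ∈ (bas.repr a).support, bas.repr a i • bas i := by
      conv_lhs => rw [← bas.linearCombination_repr a]
      rw [Finsupp.linearCombination_apply, Finsupp.sum]
    have hmem := Subalgebra.sum_mem (D (bas.repr a).support)
      fun i hi => Subalgebra.smul_mem _ (hbasmem i hi) (bas.repr a i)
    rwa [← this] at hmem
  apply le_antisymm
  · refine le_csInf ⟨Module.rank k A, Finset κ, D, ?_⟩ ?_
    · refine ⟨?_, fun s => (hDP s).1, fun s => (hDP s).2, hDdir, hDcover⟩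
      rw [Cardinal.mk_finset_of_infinite, hκcard]
    · rintro c ⟨ι, B, rfl, hfg, hhopf, hdir, hcover⟩
      haveI : Nonempty ι := by
        obtain ⟨i, _⟩ := hcover 1
        exact ⟨i⟩
      by_cases hfin : Finite ι
      · -- finite directed family: contradiction with non-fg
        haveI : Fintype ι := Fintype.ofFinite ι
        obtain ⟨i₀, hi₀⟩ := hdir.finset_le Finset.univ
        have htop : B i₀ = ⊤ := by
          rw [eq_top_iff]
          intro a _
          obtain ⟨i, hi⟩ := hcover a
          exact hi₀ i (Finset.mem_univ i) hi
        have hfgtop : (⊤ : Subalgebra k A).FG := htop ▸ hfg i₀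
        exact absurd hfgtop hnfg
      · -- infinite index
        haveI : Infinite ι := not_finite_iff_infinite.mp hfin
        have hιinf : ℵ₀ ≤ Cardinal.mk ι := Cardinal.infinite_iff.mp ‹_›
        -- choose spanning sets
        have hsp : ∀ i, ∃ s : Set A, Cardinal.mk s ≤ ℵ₀ ∧
            Submodule.span k s = Subalgebra.toSubmodule (B i) := by
          intro i
          obtain ⟨t, ht⟩ := hfg i
          refine ⟨(Submonoid.closure (↑t : Set A) : Set A), ?_, ?_⟩
          · refine (mk_closure_le _).trans ?_
            exact max_le le_rfl (le_of_lt (Cardinal.lt_aleph0_of_finite _))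
          · rw [← Algebra.adjoin_eq_span, ht]
        choose sp hsp1 hsp2 using hsp
        have hspan : Submodule.span k (⋃ i, sp i) = ⊤ := by
          rw [eq_top_iff]
          intro a _
          obtain ⟨i, hi⟩ := hcover a
          have : a ∈ Submodule.span k (sp i) := by rw [hsp2]; exact hi
          exact Submodule.span_mono (Set.subset_iUnion sp i) this
        have h1 : Module.rank k A ≤ Cardinal.mk (⋃ i, sp i) := by
          rw [← rank_top (R := k) (M := A), ← hspan]
          exact rank_span_le _
        have h2 : Cardinal.mk (⋃ i, sp i) ≤ Cardinal.mk ι := by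
          refine (Cardinal.mk_iUnion_le_sum_mk).trans ?_
          refine (Cardinal.sum_le_sum _ _ hsp1).trans ?_
          rw [Cardinal.sum_const', Cardinal.mul_eq_max hιinf le_rfl, max_eq_left hιinf]
        exact h1.trans h2
  · refine csInf_le ⟨0, fun c _ => zero_le⟩ ?_
    refine ⟨Finset κ, D, ?_, fun s => (hDP s).1, fun s => (hDP s).2, hDdir, hDcover⟩
    rw [Cardinal.mk_finset_of_infinite, hκcard]

end Main

end AuxDev


theorem stmt0 (k A : Type) [Field k] [CommRing A] [HopfAlgebra k A]
    (hnfg : ¬ (⊤ : Subalgebra k A).FG) :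
    Module.rank k A =
      sInf {c : Cardinal | ∃ S : Set A, Cardinal.mk S = c ∧ Algebra.adjoin k S = ⊤} ∧
    Module.rank k A =
      sInf {c : Cardinal | ∃ (ι : Type) (B : ι → Subalgebra k A),
        Cardinal.mk ι = c ∧ (∀ i, (B i).FG) ∧ (∀ i, IsHopfSubalgebra (B i)) ∧
        Directed (· ≤ ·) B ∧ ∀ a : A, ∃ i, a ∈ B i} :=
  ⟨stmt_two hnfg, stmt_three hnfg⟩
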